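/- For every fixed integer k ≥ 3, lim_{N→∞} φ³_{N−1−k, k−2} / φ³_{N−3, 1} = ((2k−3)! / ((k−3)!(k−1)!)) · (3/16)^{k−1}. (Equivalently: the probability under the uniform distribution on rooted type III triangulations of the sphere with N vertices that the root vertex has degree k converges, as N → ∞, to ((2k−3)!/((k−3)!(k−1)!)) · (3/16)^{k−1}; here φ³_{N−1−k,k−2}/φ³_{N−3,1} is that probability, via the bijection between size-N sphere triangulations with root degree k and rooted triangulations of a k-gon with N−1−k internal vertices, and the count φ³_{N−3,1} of all rooted sphere triangulations with N vertices.) -/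

import Mathlib

/-- The number of rooted type III triangulations of a disc with m+2 boundary
vertices and n internal vertices (for m ≥ 1). -/
noncomputable def phi3 (n m : ℕ) : ℝ :=
  (2 * Nat.factorial (2 * m + 1) * Nat.factorial (4 * n + 2 * m - 1) : ℝ) /
    (Nat.factorial (m - 1) * Nat.factorial (m + 1) * Nat.factorial n *
      Nat.factorial (3 * n + 2 * m + 1))

open Filter Finset

private lemma lin_div_tendsto (c a : ℝ) :
    Tendsto (fun M : ℕ => (c * M + a) / M) atTop (nhds c) := by
  have h0 : Tendsto (fun M : ℕ => a / M) atTop (nhds 0) :=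
    tendsto_const_div_atTop_nhds_zero_nat a
  have h := (tendsto_const_nhds (x := c)).add h0
  rw [add_zero] at h
  refine h.congr' ?_
  filter_upwards [eventually_ge_atTop 1] with M hM
  have hM0 : (M : ℝ) ≠ 0 := Nat.cast_ne_zero.mpr (by omega)
  field_simp

private lemma fact_add_prod (a b : ℕ) :
    ((Nat.factorial (a + b) : ℝ)) =
      (Nat.factorial a : ℝ) * ∏ i ∈ range b, ((a : ℝ) + b - i) := by
  induction b with
  | zero => simp
  | succ b ih =>
    rw [← add_assoc, Nat.factorial_succ, prod_range_succ']
    push_cast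
    rw [ih]
    have : ∀ i ∈ range b, ((a : ℝ) + (b + 1) - (i + 1)) = ((a : ℝ) + b - i) := by
      intro i _; ring
    rw [prod_congr rfl this]
    ring

/-- for fixed k ≥ 3, the probability φ³_{N−1−k,k−2}/φ³_{N−3,1} that the
root vertex of a uniform type III sphere triangulation with N vertices has degree k
converges to (2k−3)!/((k−3)!(k−1)!) · (3/16)^{k−1}. -/
theorem root_degree_limit (k : ℕ) (hk : 3 ≤ k) :
    Filter.Tendsto (fun N : ℕ => phi3 (N - 1 - k) (k - 2) / phi3 (N - 3) 1)
      Filter.atTop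
      (nhds ((Nat.factorial (2 * k - 3) : ℝ) /
          (Nat.factorial (k - 3) * Nat.factorial (k - 1)) * (3 / 16) ^ (k - 1))) := by
  obtain ⟨j, rfl⟩ : ∃ j, k = j + 3 := ⟨k - 3, by omega⟩
  rw [show 2*(j+3)-3 = 2*j+3 by omega, show j+3-3 = j by omega,
      show j+3-1 = j+2 by omega, show j+3-2 = j+1 by omega]
  rw [← Filter.tendsto_add_atTop_iff_nat (3*j+12)]
  have hT : Tendsto (fun M : ℕ =>
      (Nat.factorial (2*j+3) : ℝ) / ((Nat.factorial j) * (Nat.factorial (j+2)) * 3) *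
        ((∏ i ∈ range (j+1), (((M:ℝ) + (3*j+9) - i) / M)) *
         (∏ i ∈ range (j+3), ((3*(M:ℝ) + (9*j+30) - i) / M))) /
        (∏ i ∈ range (2*j+4), ((4*(M:ℝ) + (12*j+37) - i) / M)))
      atTop (nhds ((Nat.factorial (2*j+3) : ℝ) /
          (Nat.factorial j * Nat.factorial (j+2)) * (3 / 16) ^ (j+2))) := by
    have hA : Tendsto (fun M : ℕ => ∏ i ∈ range (j+1), (((M:ℝ) + (3*j+9) - i) / M))
        atTop (nhds 1) := by
      have := tendsto_finset_prod (f := fun (i : ℕ) (M : ℕ) => (((M:ℝ) + (3*j+9) - i) / M))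
        (a := fun _ => (1:ℝ)) (range (j+1))
        (fun i _ => (lin_div_tendsto 1 ((3*j+9 : ℝ) - i)).congr (fun M => by ring_nf))
      simpa using this
    have hB : Tendsto (fun M : ℕ => ∏ i ∈ range (j+3), ((3*(M:ℝ) + (9*j+30) - i) / M))
        atTop (nhds ((3:ℝ)^(j+3))) := by
      have := tendsto_finset_prod (f := fun (i : ℕ) (M : ℕ) => ((3*(M:ℝ) + (9*j+30) - i) / M))
        (a := fun _ => (3:ℝ)) (range (j+3))
        (fun i _ => (lin_div_tendsto 3 ((9*j+30 : ℝ) - i)).congr (fun M => by ring_nf))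
      simpa using this
    have hD : Tendsto (fun M : ℕ => ∏ i ∈ range (2*j+4), ((4*(M:ℝ) + (12*j+37) - i) / M))
        atTop (nhds ((4:ℝ)^(2*j+4))) := by
      have := tendsto_finset_prod (f := fun (i : ℕ) (M : ℕ) => ((4*(M:ℝ) + (12*j+37) - i) / M))
        (a := fun _ => (4:ℝ)) (range (2*j+4))
        (fun i _ => (lin_div_tendsto 4 ((12*j+37 : ℝ) - i)).congr (fun M => by ring_nf))
      simpa using this
    have h := ((tendsto_const_nhds (x := (Nat.factorial (2*j+3) : ℝ) /
        ((Nat.factorial j) * (Nat.factorial (j+2)) * 3))).mul (hA.mul hB)).div hD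
        (by positivity)
    convert h using 2
    · rfl
    have hf : (Nat.factorial j : ℝ) * (Nat.factorial (j+2)) ≠ 0 := by positivity
    rw [show (4:ℝ)^(2*j+4) = 16^(j+2) by rw [show 2*j+4 = 2*(j+2) by ring, pow_mul]; norm_num]
    rw [div_pow]
    rw [show j+3 = (j+2)+1 from rfl, pow_succ]
    field_simp
    ring
  refine hT.congr' ?_
  filter_upwards [eventually_ge_atTop 1] with M hM
  have e1 : M + (3*j+12) - 1 - (j+3) = M + (2*j+8) := by omega
  have e2 : M + (3*j+12) - 3 = M + (3*j+9) := by omega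
  rw [e1, e2]
  simp only [phi3]
  rw [show 2*(j+1)+1 = 2*j+3 by ring]
  rw [show 4*(M+(2*j+8)) + 2*(j+1) - 1 = 4*M + (10*j+33) by omega]
  rw [show (j+1)-1 = j by omega]
  rw [show 3*(M+(2*j+8)) + 2*(j+1) + 1 = 3*M + (8*j+27) by ring]
  rw [show 4*(M+(3*j+9)) + 2*1 - 1 = 4*M + (12*j+37) by omega]
  rw [show 3*(M+(3*j+9)) + 2*1 + 1 = 3*M + (9*j+30) by ring]
  have h1 : ((Nat.factorial (M + (3*j+9)) : ℝ)) =
      (Nat.factorial (M + (2*j+8)) : ℝ) * ∏ i ∈ range (j+1), (((M:ℝ) + (3*j+9)) - i) := by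
    rw [show M + (3*j+9) = (M + (2*j+8)) + (j+1) by ring, fact_add_prod]
    refine congrArg _ (prod_congr rfl fun i _ => by push_cast; ring)
  have h2 : ((Nat.factorial (3*M + (9*j+30)) : ℝ)) =
      (Nat.factorial (3*M + (8*j+27)) : ℝ) * ∏ i ∈ range (j+3), ((3*(M:ℝ) + (9*j+30)) - i) := by
    rw [show 3*M + (9*j+30) = (3*M + (8*j+27)) + (j+3) by ring, fact_add_prod]
    refine congrArg _ (prod_congr rfl fun i _ => by push_cast; ring)
  have h3 : ((Nat.factorial (4*M + (12*j+37)) : ℝ)) =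
      (Nat.factorial (4*M + (10*j+33)) : ℝ) * ∏ i ∈ range (2*j+4), ((4*(M:ℝ) + (12*j+37)) - i) := by
    rw [show 4*M + (12*j+37) = (4*M + (10*j+33)) + (2*j+4) by ring, fact_add_prod]
    refine congrArg _ (prod_congr rfl fun i _ => by push_cast; ring)
  rw [h1, h2, h3]
  have hM0 : (M : ℝ) ≠ 0 := Nat.cast_ne_zero.mpr (by omega)
  have hf : ∀ n : ℕ, (Nat.factorial n : ℝ) ≠ 0 :=
    fun n => Nat.cast_ne_zero.mpr (Nat.factorial_ne_zero n)
  have hp1 : (∏ i ∈ range (j+1), (((M:ℝ) + (3*j+9)) - i)) ≠ 0 := by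
    refine ne_of_gt (prod_pos fun i hi => ?_)
    have h1 : (i:ℝ) < j+1 := by exact_mod_cast mem_range.mp hi
    have h2 : (0:ℝ) ≤ M := Nat.cast_nonneg M
    nlinarith
  have hp2 : (∏ i ∈ range (j+3), ((3*(M:ℝ) + (9*j+30)) - i)) ≠ 0 := by
    refine ne_of_gt (prod_pos fun i hi => ?_)
    have h1 : (i:ℝ) < j+3 := by exact_mod_cast mem_range.mp hi
    have h2 : (0:ℝ) ≤ M := Nat.cast_nonneg M
    nlinarith
  have hp3 : (∏ i ∈ range (2*j+4), ((4*(M:ℝ) + (12*j+37)) - i)) ≠ 0 := by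
    refine ne_of_gt (prod_pos fun i hi => ?_)
    have h1 : (i:ℝ) < 2*j+4 := by exact_mod_cast mem_range.mp hi
    have h2 : (0:ℝ) ≤ M := Nat.cast_nonneg M
    nlinarith
  simp only [prod_div_distrib, prod_const, card_range]
  rw [Nat.factorial_zero]
  simp only [show 2*1+1 = 3 from rfl, show (1+1 : ℕ) = 2 from rfl, Nat.factorial_two, Nat.cast_one, Nat.cast_ofNat, one_mul]
  rw [show j+1+1 = j+2 from rfl]
  field_simp
  rw [show (Nat.factorial 3 : ℕ) = 6 from rfl]
  push_cast
  ring
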